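/- For the quantum torus F_q viewed as a Lie algebra under the commutator, F_q decomposes as a direct sum of Lie ideals F_q = C(F_q) ⊕ [F_q, F_q], where C(F_q) = ⊕_{a ∈ rad(f)} F t^a. -/

import Mathlib

open Finset in
/-- The twisting scalar `σ(a,b) = ∏_{i>j} q_{ji}^{a_j b_i}` of a quantum torus. -/
noncomputable def quantumSigma {n : ℕ} {F : Type*} [Field F]
    (q : Matrix (Fin n) (Fin n) F) (a b : Fin n → ℤ) : F :=
  ∏ i : Fin n, ∏ j ∈ Finset.univ.filter (fun j => j < i), q j i ^ (a j * b i)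

attribute [local instance] LieRing.ofAssociativeRing

private lemma qS_ne_zero {n : ℕ} {F : Type*} [Field F] {q : Matrix (Fin n) (Fin n) F}
    (hq0 : ∀ i j, q i j ≠ 0) (a b : Fin n → ℤ) : quantumSigma q a b ≠ 0 := by
  unfold quantumSigma
  exact Finset.prod_ne_zero_iff.2 fun i _ =>
    Finset.prod_ne_zero_iff.2 fun j _ => zpow_ne_zero _ (hq0 j i)

private lemma qS_add_left {n : ℕ} {F : Type*} [Field F] {q : Matrix (Fin n) (Fin n) F}
    (hq0 : ∀ i j, q i j ≠ 0) (a a' b : Fin n → ℤ) :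
    quantumSigma q (a + a') b = quantumSigma q a b * quantumSigma q a' b := by
  unfold quantumSigma
  rw [← Finset.prod_mul_distrib]
  refine Finset.prod_congr rfl fun i _ => ?_
  rw [← Finset.prod_mul_distrib]
  refine Finset.prod_congr rfl fun j _ => ?_
  rw [Pi.add_apply, add_mul, zpow_add₀ (hq0 j i)]

private lemma qS_add_right {n : ℕ} {F : Type*} [Field F] {q : Matrix (Fin n) (Fin n) F}
    (hq0 : ∀ i j, q i j ≠ 0) (a b b' : Fin n → ℤ) :
    quantumSigma q a (b + b') = quantumSigma q a b * quantumSigma q a b' := by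
  unfold quantumSigma
  rw [← Finset.prod_mul_distrib]
  refine Finset.prod_congr rfl fun i _ => ?_
  rw [← Finset.prod_mul_distrib]
  refine Finset.prod_congr rfl fun j _ => ?_
  rw [Pi.add_apply, mul_add, zpow_add₀ (hq0 j i)]

/-- The quantum torus, viewed as a Lie algebra under the commutator, decomposes as the
direct sum of Lie ideals `F_q = C(F_q) ⊕ [F_q, F_q]`, where the center `C(F_q)` is
spanned by the monomials `t^a` with `a ∈ rad(f)`, `f(a,b) = σ(a,b)σ(b,a)⁻¹`. -/
theorem quantumTorus_center_isCompl_derived {n : ℕ} (F : Type*) [Field F] [CharZero F]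
    (q : Matrix (Fin n) (Fin n) F) (hq0 : ∀ i j, q i j ≠ 0) (hq1 : ∀ i, q i i = 1)
    (hq2 : ∀ i j, q j i = (q i j)⁻¹)
    (A : Type*) [Ring A] [Algebra F A] (t : Module.Basis ((Fin n) → ℤ) F A)
    (hmul : ∀ a b : Fin n → ℤ, t a * t b = quantumSigma q a b • t (a + b)) :
    (LieSubmodule.toSubmodule (LieAlgebra.center F A) =
      Submodule.span F (t '' {a : Fin n → ℤ |
        ∀ b : Fin n → ℤ, quantumSigma q a b * (quantumSigma q b a)⁻¹ = 1})) ∧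
    IsCompl (LieAlgebra.center F A) ⁅(⊤ : LieIdeal F A), (⊤ : LieIdeal F A)⁆ := by
  classical
  have h0 : ∀ a b : Fin n → ℤ, quantumSigma q a b ≠ 0 := fun a b => qS_ne_zero hq0 a b
  set R : Set (Fin n → ℤ) := {a : Fin n → ℤ |
      ∀ b : Fin n → ℤ, quantumSigma q a b * (quantumSigma q b a)⁻¹ = 1} with hRdef
  have hRmem : ∀ a : Fin n → ℤ, a ∈ R ↔ ∀ b, quantumSigma q a b = quantumSigma q b a := by
    intro a
    constructor
    · intro h b; exact (mul_inv_eq_one₀ (h0 b a)).1 (h b)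
    · intro h b; exact (mul_inv_eq_one₀ (h0 b a)).2 (h b)
  set C : Submodule F A := Submodule.span F (t '' R) with hCdef
  set D : Submodule F A := Submodule.span F (t '' Rᶜ) with hDdef
  have hbr : ∀ a b : Fin n → ℤ,
      ⁅t a, t b⁆ = (quantumSigma q a b - quantumSigma q b a) • t (a + b) := by
    intro a b
    rw [Ring.lie_def, hmul, hmul, add_comm b a, sub_smul]
  have hnotR : ∀ a ∉ R, ∃ b, quantumSigma q a b ≠ quantumSigma q b a := by
    intro a ha
    by_contra h
    push_neg at h
    exact ha ((hRmem a).2 h)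
  -- C ⊆ center
  have hCle : C ≤ LieSubmodule.toSubmodule (LieAlgebra.center F A) := by
    rw [hCdef, Submodule.span_le]
    rintro z ⟨a, haR, rfl⟩
    simp only [SetLike.mem_coe, LieSubmodule.mem_toSubmodule]
    rw [LieModule.mem_maxTrivSubmodule]
    intro y
    have key : (LinearMap.mulRight F (t a) - LinearMap.mulLeft F (t a)) = 0 := by
      refine t.ext fun b => ?_
      simp only [LinearMap.sub_apply, LinearMap.mulLeft_apply, LinearMap.mulRight_apply,
        LinearMap.zero_apply]
      rw [hmul, hmul, add_comm b a, (hRmem a).1 haR b, sub_self]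
    have := congrArg (fun f : A →ₗ[F] A => f y) key
    simpa [Ring.lie_def] using this
  -- center ⊆ C
  have hcenterle : LieSubmodule.toSubmodule (LieAlgebra.center F A) ≤ C := by
    intro x hx
    rw [LieSubmodule.mem_toSubmodule, LieModule.mem_maxTrivSubmodule] at hx
    have hcoeff : ∀ a ∉ R, t.repr x a = 0 := by
      intro a ha
      obtain ⟨b, hb⟩ := hnotR a ha
      set M : A →ₗ[F] A := LinearMap.mulRight F (t b) - LinearMap.mulLeft F (t b) with hM
      have hMx : M x = 0 := by
        have h3 : t b * x - x * t b = 0 := by rw [← Ring.lie_def]; exact hx (t b)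
        have h2 : x * t b - t b * x = 0 := by
          rw [← neg_sub, h3, neg_zero]
        simpa [hM, LinearMap.sub_apply] using h2
      have hkey : (t.coord (a + b)).comp M
          = (quantumSigma q a b - quantumSigma q b a) • t.coord a := by
        refine t.ext fun c => ?_
        simp only [LinearMap.comp_apply, hM, LinearMap.sub_apply, LinearMap.mulRight_apply,
          LinearMap.mulLeft_apply, LinearMap.smul_apply]
        rw [hmul, hmul, add_comm b c, ← sub_smul, map_smul]
        rw [Module.Basis.coord_apply, Module.Basis.coord_apply, Module.Basis.repr_self, Module.Basis.repr_self]
        rw [Finsupp.single_apply, Finsupp.single_apply]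
        by_cases h : c = a
        · subst h; simp
        · have hne : ¬(c + b = a + b) := fun hcb => h (by
            funext i
            have := congrFun hcb i
            simpa using this)
          simp [h, hne]
      have hval := congrArg (fun f : A →ₗ[F] F => f x) hkey
      simp only [LinearMap.comp_apply, hMx, map_zero, LinearMap.smul_apply,
        Module.Basis.coord_apply, smul_eq_mul] at hval
      have hne : quantumSigma q a b - quantumSigma q b a ≠ 0 := sub_ne_zero.2 hb
      exact (mul_eq_zero.1 hval.symm).resolve_left hne
    have hx2 : x = (t.repr x).sum fun c r => r • t c := by
      conv_lhs => rw [← t.linearCombination_repr x]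
      rw [Finsupp.linearCombination_apply]
    rw [hx2, Finsupp.sum]
    refine Submodule.sum_mem _ fun c hc => Submodule.smul_mem _ _
      (Submodule.subset_span ⟨c, ?_, rfl⟩)
    by_contra hcR
    exact (Finsupp.mem_support_iff.1 hc) (hcoeff c hcR)
  -- derived ⊆ D
  have hDbase : ∀ c d : Fin n → ℤ, ⁅t c, t d⁆ ∈ D := by
    intro c d
    rw [hbr]
    by_cases h : quantumSigma q c d = quantumSigma q d c
    · rw [h, sub_self, zero_smul]; exact D.zero_mem
    · refine Submodule.smul_mem _ _ (Submodule.subset_span ⟨c + d, ?_, rfl⟩)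
      intro hR'
      apply h
      have h1 := (hRmem _).1 hR' d
      rw [qS_add_left hq0, qS_add_right hq0] at h1
      exact mul_right_cancel₀ (h0 d d) h1
  have hD1 : ∀ c : Fin n → ℤ, ∀ y : A, ⁅t c, y⁆ ∈ D := by
    intro c y
    have hy : y ∈ Submodule.span F (Set.range t) := by rw [t.span_eq]; trivial
    induction hy using Submodule.span_induction with
    | mem z hz => obtain ⟨d, rfl⟩ := hz; exact hDbase c d
    | zero => rw [lie_zero]; exact D.zero_mem
    | add u v _ _ hu hv => rw [lie_add]; exact D.add_mem hu hv
    | smul r u _ hu => rw [lie_smul]; exact D.smul_mem r hu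
  have hD2 : ∀ x y : A, ⁅x, y⁆ ∈ D := by
    intro x y
    have hxs : x ∈ Submodule.span F (Set.range t) := by rw [t.span_eq]; trivial
    induction hxs using Submodule.span_induction with
    | mem z hz => obtain ⟨c, rfl⟩ := hz; exact hD1 c y
    | zero => rw [zero_lie]; exact D.zero_mem
    | add u v _ _ hu hv => rw [add_lie]; exact D.add_mem hu hv
    | smul r u _ hu => rw [smul_lie]; exact D.smul_mem r hu
  -- derived = D
  have hder : (LieSubmodule.toSubmodule ⁅(⊤ : LieIdeal F A), (⊤ : LieIdeal F A)⁆) = D := by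
    apply le_antisymm
    · rw [LieSubmodule.lieIdeal_oper_eq_linear_span, Submodule.span_le]
      rintro z ⟨x, y, rfl⟩
      exact hD2 x y
    · rw [hDdef, Submodule.span_le]
      rintro z ⟨a, ha, rfl⟩
      obtain ⟨b, hb⟩ := hnotR a ha
      have h1 : quantumSigma q b (a - b) ≠ quantumSigma q (a - b) b := by
        intro h
        apply hb
        have e1 : quantumSigma q b (a - b) * quantumSigma q b b = quantumSigma q b a := by
          rw [← qS_add_right hq0, sub_add_cancel]
        have e2 : quantumSigma q (a - b) b * quantumSigma q b b = quantumSigma q a b := by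
          rw [← qS_add_left hq0, sub_add_cancel]
        rw [← e1, ← e2, h]
      have hbr2 := hbr b (a - b)
      have hab : b + (a - b) = a := by abel
      rw [hab] at hbr2
      have hne : quantumSigma q b (a - b) - quantumSigma q (a - b) b ≠ 0 := sub_ne_zero.2 h1
      have hta : t a = (quantumSigma q b (a - b) - quantumSigma q (a - b) b)⁻¹ •
          ⁅t b, t (a - b)⁆ := by
        rw [hbr2, smul_smul, inv_mul_cancel₀ hne, one_smul]
      rw [SetLike.mem_coe, hta]
      refine Submodule.smul_mem _ _ ?_
      rw [LieSubmodule.mem_toSubmodule]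
      exact LieSubmodule.lie_mem_lie (LieSubmodule.mem_top _) (LieSubmodule.mem_top _)
  -- C, D complementary
  have hcompl : IsCompl C D := by
    constructor
    · exact t.linearIndependent.disjoint_span_image disjoint_compl_right
    · rw [codisjoint_iff, hCdef, hDdef, ← Submodule.span_union, ← Set.image_union,
        Set.union_compl_self, Set.image_univ, t.span_eq]
  have hcenter : LieSubmodule.toSubmodule (LieAlgebra.center F A) = C :=
    le_antisymm hcenterle hCle
  refine ⟨hcenter, ?_, ?_⟩
  · rw [disjoint_iff, ← LieSubmodule.toSubmodule_inj, LieSubmodule.inf_toSubmodule,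
      hcenter, hder, LieSubmodule.bot_toSubmodule]
    exact hcompl.inf_eq_bot
  · rw [codisjoint_iff, ← LieSubmodule.toSubmodule_inj, LieSubmodule.sup_toSubmodule,
      hcenter, hder, LieSubmodule.top_toSubmodule]
    exact hcompl.sup_eq_top
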